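/- Let σ > 0 and c > 0, and let k_1, ..., k_T be real numbers with 0 ≤ k_t ≤ c for all t. Define ρ = (1/2) Σ_{t=1}^T log(1 + σ^{−2} k_t). Then min_{t∈[T]} k_t ≤ 2cρ / (T·log(1 + c·σ^{−2})). -/

import Mathlib

open Finset

lemma aux_bern (s x c : ℝ) (hs : 0 < s) (hc : 0 < c) (hx0 : 0 ≤ x) (hxc : x ≤ c) :
    x * Real.log (1 + c * s) ≤ c * Real.log (1 + s * x) := by
  have hp0 : 0 ≤ x / c := div_nonneg hx0 hc.le
  have hp1 : x / c ≤ 1 := (div_le_one hc).2 hxc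
  have hcs : (0:ℝ) < 1 + c * s := by positivity
  have hb : (1 + c * s) ^ (x / c) ≤ 1 + (x / c) * (c * s) :=
    rpow_one_add_le_one_add_mul_self (by linarith [mul_pos hc hs]) hp0 hp1
  have heq : (x / c) * (c * s) = s * x := by field_simp
  rw [heq] at hb
  have hsx : (0:ℝ) < 1 + s * x := by positivity
  have hlog := Real.log_le_log (Real.rpow_pos_of_pos hcs _) hb
  rw [Real.log_rpow hcs] at hlog
  have := mul_le_mul_of_nonneg_left hlog hc.le
  calc x * Real.log (1 + c * s) = c * (x / c * Real.log (1 + c * s)) := by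
        field_simp
    _ ≤ c * Real.log (1 + s * x) := this

theorem stmt9 (T : ℕ) (hT : 1 ≤ T) (σ c : ℝ) (hσ : 0 < σ) (hc : 0 < c)
    (k : Fin T → ℝ) (hk : ∀ t, 0 ≤ k t ∧ k t ≤ c)
    (ρ : ℝ) (hρ : ρ = (1 / 2) * ∑ t : Fin T, Real.log (1 + σ⁻¹ ^ 2 * k t)) :
    ∃ τ : Fin T, (∀ t, k τ ≤ k t) ∧
      k τ ≤ 2 * c * ρ / (T * Real.log (1 + c * σ⁻¹ ^ 2)) := by
  have hne : (Finset.univ : Finset (Fin T)).Nonempty := by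
    simpa [Finset.univ_nonempty_iff] using Fin.pos_iff_nonempty.mp hT
  obtain ⟨τ, -, hτmin⟩ := Finset.exists_min_image Finset.univ k hne
  have hτmin' : ∀ t, k τ ≤ k t := fun t => hτmin t (mem_univ t)
  refine ⟨τ, hτmin', ?_⟩
  have hs : (0:ℝ) < σ⁻¹ ^ 2 := by positivity
  -- T * log(1 + s * kτ) ≤ 2ρ
  have hsum : (T : ℝ) * Real.log (1 + σ⁻¹ ^ 2 * k τ) ≤ 2 * ρ := by
    rw [hρ]
    have : ∀ t : Fin T, Real.log (1 + σ⁻¹ ^ 2 * k τ) ≤ Real.log (1 + σ⁻¹ ^ 2 * k t) := by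
      intro t
      apply Real.log_le_log (by have := (hk τ).1; positivity)
      have := hτmin' t
      nlinarith
    calc (T : ℝ) * Real.log (1 + σ⁻¹ ^ 2 * k τ)
        = ∑ _t : Fin T, Real.log (1 + σ⁻¹ ^ 2 * k τ) := by
          simp [Finset.sum_const, mul_comm]
      _ ≤ ∑ t : Fin T, Real.log (1 + σ⁻¹ ^ 2 * k t) := Finset.sum_le_sum fun t _ => this t
      _ = 2 * ((1/2) * ∑ t : Fin T, Real.log (1 + σ⁻¹ ^ 2 * k t)) := by ring
  have hbern := aux_bern (σ⁻¹ ^ 2) (k τ) c hs hc (hk τ).1 (hk τ).2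
  have hT0 : (0:ℝ) < T := by exact_mod_cast hT
  have hlogc : 0 < Real.log (1 + c * σ⁻¹ ^ 2) := by
    apply Real.log_pos; nlinarith
  rw [le_div_iff₀ (by positivity)]
  have := mul_le_mul_of_nonneg_left hsum hc.le
  nlinarith [mul_le_mul_of_nonneg_left hsum hc.le, mul_le_mul_of_nonneg_left hbern hT0.le]
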